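/- Let A be a Q(q)-algebra, B ∈ A, Z a central element of A, and let B^{(m)}_{p̄} (p̄ ∈ Z/2, m ≥ 0) be any family of elements of A with B^{(0)}_{p̄} = 1 satisfying the recursion: B · B^{(m)}_{p̄} = [m+1]_q B^{(m+1)}_{p̄} when p̄ ≠ m̄ (mod 2), and B · B^{(m)}_{p̄} = [m+1]_q B^{(m+1)}_{p̄} + [m]_q q Z B^{(m−1)}_{p̄} when p̄ = m̄ (with B^{(−1)}_{p̄} := 0). Then this family is unique, and it coincides with the closed-formula ı-divided powers: B^{(2k+1)}_{1̄} = (1/[2k+1]_q!) B ∏_{j=1}^k (B² − [2j−1]_q² qZ), B^{(2k)}_{1̄} = (1/[2k]_q!) ∏_{j=1}^k (B² − [2j−1]_q² qZ), B^{(2k+1)}_{0̄} = (1/[2k+1]_q!) B ∏_{j=1}^k (B² − [2j]_q² qZ), and B^{(2k)}_{0̄} = (1/[2k]_q!) ∏_{j=1}^k (B² − [2j−2]_q² qZ). -/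

import Mathlib

noncomputable section

abbrev K : Type := RatFunc ℚ

/-- The indeterminate `q` in `ℚ(q)`. -/
def qq : K := RatFunc.X

/-- Balanced quantum integer at base `x`. -/
def qintx (x : K) (m : ℤ) : K := (x ^ m - x ^ (-m)) / (x - x⁻¹)

/-- Balanced quantum integer `[m]_q`. -/
def qint (m : ℤ) : K := qintx qq m

/-- Quantum factorial at base `x`. -/
def qfactx (x : K) (m : ℕ) : K := ∏ j ∈ Finset.range m, qintx x ((j : ℤ) + 1)

/-- Quantum factorial `[m]_q!`. -/
def qfact (m : ℕ) : K := qfactx qq m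

/-- Gaussian binomial coefficient at base `x` (zero when `r > m`). -/
def qbinomx (x : K) (m r : ℕ) : K :=
  if r ≤ m then qfactx x m / (qfactx x r * qfactx x (m - r)) else 0

/-- Gaussian binomial coefficient. -/
def qbinom (m r : ℕ) : K := qbinomx qq m r

/-- The ı-divided powers `B^{(m)}_{p̄}` of `B` with central parameter `Z`,
given by the closed product formulas of the paper. -/
def iDP {A : Type*} [Ring A] [Algebra K A] (B Z : A) (p : ZMod 2) (m : ℕ) : A :=
  (qfact m)⁻¹ •
    ((if m % 2 = 1 then B else 1) *
      ((List.range (m / 2)).map (fun j =>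
        B ^ 2 -
          ((qint (if p = 1 then 2 * (j : ℤ) + 1
                  else if m % 2 = 1 then 2 * (j : ℤ) + 2 else 2 * (j : ℤ))) ^ 2 * qq) • Z)).prod)

/-- The usual divided power `x^{(k)} = x^k/[k]_q!`. -/
def dp {A : Type*} [Ring A] [Algebra K A] (x : A) (k : ℕ) : A := (qfact k)⁻¹ • x ^ k


/-! ### Scalar lemmas -/

lemma qq_pow_ne_one (n : ℕ) (hn : n ≠ 0) : qq ^ n ≠ 1 := by
  have : qq ^ n = algebraMap (Polynomial ℚ) K (Polynomial.X ^ n) := by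
    rw [map_pow, RatFunc.algebraMap_X, qq]
  rw [this, ← map_one (algebraMap (Polynomial ℚ) K)]
  intro h
  have h2 := RatFunc.algebraMap_injective (K := ℚ) h
  have := congrArg Polynomial.natDegree h2
  simp [Polynomial.natDegree_X_pow] at this
  exact hn this

lemma qq_ne_zero : qq ≠ 0 := RatFunc.X_ne_zero

lemma denom_ne : qq - qq⁻¹ ≠ 0 := by
  intro h
  have h1 : qq = qq⁻¹ := by linear_combination h
  have h0 := qq_ne_zero
  have : qq ^ 2 = 1 := by
    field_simp at h1
    linear_combination h1
  exact qq_pow_ne_one 2 (by norm_num) this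

lemma qint_nat_ne_zero (n : ℕ) (hn : n ≠ 0) : qint (n : ℤ) ≠ 0 := by
  rw [qint, qintx]
  apply div_ne_zero _ denom_ne
  rw [zpow_natCast, zpow_neg, zpow_natCast]
  intro h
  have h1 : qq ^ n = (qq ^ n)⁻¹ := by linear_combination h
  have hq : qq ^ n ≠ 0 := pow_ne_zero _ qq_ne_zero
  have : qq ^ (2 * n) = 1 := by
    rw [two_mul, pow_add]
    field_simp at h1
    linear_combination h1
  exact qq_pow_ne_one (2 * n) (by omega) this

lemma qint_zero : qint 0 = 0 := by simp [qint, qintx]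

lemma qint_one : qint 1 = 1 := by
  rw [qint, qintx]
  simp only [zpow_one, zpow_neg]
  exact div_self denom_ne

lemma qfact_succ (m : ℕ) : qfact (m + 1) = qfact m * qint ((m : ℤ) + 1) := by
  rw [qfact, qfact, qfactx, qfactx, Finset.prod_range_succ]; rfl

lemma qfact_ne_zero (m : ℕ) : qfact m ≠ 0 := by
  induction m with
  | zero => simp [qfact, qfactx]
  | succ n ih =>
    rw [qfact_succ]
    exact mul_ne_zero ih (by exact_mod_cast qint_nat_ne_zero (n+1) (by omega))

lemma qint_succ_ne_zero (m : ℕ) : qint ((m : ℤ) + 1) ≠ 0 := by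
  have := qint_nat_ne_zero (m + 1) (by omega)
  push_cast at this
  exact this

lemma qfact_inv_succ (m : ℕ) : qint ((m : ℤ) + 1) * (qfact (m + 1))⁻¹ = (qfact m)⁻¹ := by
  rw [qfact_succ]
  have h1 := qfact_ne_zero m
  have h2 := qint_succ_ne_zero m
  field_simp

/-! ### Product machinery -/

lemma flatMap_map {α β : Type*} (f : α → β) (l : List α) :
    (l.flatMap fun a => [f a]) = l.map f := by
  induction l with
  | nil => rfl
  | cons a l ih => simp [ih]

section Prod
variable {A : Type*} [Ring A] [Algebra K A] (B Z : A)

def pr (c : ℕ → K) (k : ℕ) : A :=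
  ((List.range k).map (fun j => B ^ 2 - c j • Z)).prod

variable (hZ : ∀ a : A, Z * a = a * Z)

lemma pr_zero (c : ℕ → K) : pr B Z c 0 = 1 := rfl

lemma pr_succ (c : ℕ → K) (k : ℕ) :
    pr B Z c (k + 1) = pr B Z c k * (B ^ 2 - c k • Z) := by
  rw [pr, pr, List.range_succ, List.map_append, List.prod_append]
  simp

lemma pr_cons (c : ℕ → K) (k : ℕ) :
    pr B Z c (k + 1) = (B ^ 2 - c 0 • Z) * pr B Z (fun j => c (j + 1)) k := by
  rw [pr, pr, List.range_succ_eq_map, List.map_cons, List.prod_cons, List.map_map]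
  rfl

include hZ

lemma Bsq_pr (c : ℕ → K) (k : ℕ) : B ^ 2 * pr B Z c k = pr B Z c k * B ^ 2 := by
  induction k with
  | zero => simp [pr_zero]
  | succ n ih =>
    rw [pr_succ, ← mul_assoc, ih, mul_assoc, mul_assoc]
    congr 1
    rw [mul_sub, sub_mul, mul_smul_comm, smul_mul_assoc, hZ]

lemma pr_succ' (c : ℕ → K) (k : ℕ) :
    pr B Z c (k + 1) = B ^ 2 * pr B Z c k - c k • (Z * pr B Z c k) := by
  rw [pr_succ, mul_sub, Bsq_pr B Z hZ, mul_smul_comm, hZ]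

end Prod

/-! ### Evaluations of `iDP` -/

section Eval
variable {A : Type*} [Ring A] [Algebra K A] (B Z : A)

def cfun (p : ZMod 2) (odd : Bool) (j : ℕ) : K :=
  (qint (if p = 1 then 2 * (j : ℤ) + 1
         else if odd then 2 * (j : ℤ) + 2 else 2 * (j : ℤ))) ^ 2 * qq

lemma iDP_even (p : ZMod 2) (k : ℕ) :
    iDP B Z p (2 * k) = (qfact (2 * k))⁻¹ • pr B Z (cfun p false) k := by
  have h1 : (2 * k) % 2 = 0 := by omega
  have h2 : (2 * k) / 2 = k := by omega
  rw [iDP, h1, h2]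
  simp only [pr, cfun, List.pure_def, List.bind_eq_flatMap, List.map_flatMap,
    flatMap_map, List.map_singleton, reduceIte, Nat.zero_ne_one, one_mul,
    Bool.false_eq_true, if_false, List.map_map]
  rfl

lemma iDP_odd (p : ZMod 2) (k : ℕ) :
    iDP B Z p (2 * k + 1) = (qfact (2 * k + 1))⁻¹ • (B * pr B Z (cfun p true) k) := by
  have h1 : (2 * k + 1) % 2 = 1 := by omega
  have h2 : (2 * k + 1) / 2 = k := by omega
  rw [iDP, h1, h2]
  simp only [pr, cfun, List.pure_def, List.bind_eq_flatMap, List.map_flatMap,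
    flatMap_map, List.map_singleton, reduceIte, Nat.zero_ne_one, one_mul,
    Bool.false_eq_true, if_false, List.map_map]
  rfl

lemma iDP_zero (p : ZMod 2) : iDP B Z p 0 = 1 := by
  have := iDP_even B Z p 0
  simpa [pr_zero, qfact, qfactx] using this

lemma cfun_one (b : Bool) (j : ℕ) : cfun 1 b j = qint (2 * (j : ℤ) + 1) ^ 2 * qq := by
  simp [cfun]

lemma cfun_one_eq : cfun 1 false = cfun 1 true := by
  funext j; rw [cfun_one, cfun_one]

lemma cfun_zero_true (j : ℕ) : cfun 0 true j = qint (2 * (j : ℤ) + 2) ^ 2 * qq := by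
  have : (0 : ZMod 2) ≠ 1 := by decide
  simp [cfun, this]

lemma cfun_zero_false (j : ℕ) : cfun 0 false j = qint (2 * (j : ℤ)) ^ 2 * qq := by
  have : (0 : ZMod 2) ≠ 1 := by decide
  simp [cfun, this]

lemma cfun_zero_shift : (fun j => cfun 0 false (j + 1)) = cfun 0 true := by
  funext j
  rw [cfun_zero_false, cfun_zero_true]
  congr 2

lemma cfun_zero_false_zero : cfun 0 false 0 = 0 := by
  rw [cfun_zero_false]
  norm_num [qint_zero]

end Eval

/-! ### Recursion for `iDP` -/

lemma scalar_key (F a b q' : K) (hF : F ≠ 0) (ha : a ≠ 0) (hb : b ≠ 0) :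
    b * ((F * a * b)⁻¹ * (a ^ 2 * q')) = a * q' * F⁻¹ := by
  field_simp

section Rec
variable {A : Type*} [Ring A] [Algebra K A] (B Z : A)

lemma L1 (k : ℕ) :
    B * iDP B Z 1 (2 * k) = qint ((2 * k : ℕ) + 1) • iDP B Z 1 (2 * k + 1) := by
  rw [iDP_even, iDP_odd, mul_smul_comm, cfun_one_eq, smul_smul]
  congr 1
  exact (qfact_inv_succ (2 * k)).symm

lemma L2 (k : ℕ) :
    B * iDP B Z 0 (2 * k + 1) = qint ((2 * k + 1 : ℕ) + 1) • iDP B Z 0 (2 * k + 1 + 1) := by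
  rw [iDP_odd, show 2 * k + 1 + 1 = 2 * (k + 1) from by ring, iDP_even, pr_cons,
    cfun_zero_false_zero, zero_smul, sub_zero, cfun_zero_shift, mul_smul_comm,
    ← mul_assoc, ← sq, smul_smul]
  congr 1
  rw [show 2 * (k + 1) = 2 * k + 1 + 1 from by ring, qfact_inv_succ]

lemma iDP_one_zero : iDP B Z 0 1 = B := by
  have h := iDP_odd B Z 0 0
  rw [pr_zero, mul_one] at h
  norm_num at h
  have h1 : qfact 1 = 1 := by
    rw [show (1 : ℕ) = 0 + 1 from rfl, qfact_succ]
    norm_num [qint_one, qfact, qfactx]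
  rw [h, h1, inv_one, one_smul]

variable (hZ : ∀ a : A, Z * a = a * Z)

omit [Algebra K A] in
lemma hBZ (hZ : ∀ a : A, Z * a = a * Z) (x : A) : B * (Z * x) = Z * (B * x) := by
  rw [hZ x, hZ (B * x), mul_assoc]

include hZ

lemma L3 (k : ℕ) :
    B * iDP B Z 1 (2 * k + 1) = qint ((2 * k + 1 : ℕ) + 1) • iDP B Z 1 (2 * k + 1 + 1)
      + (qint (2 * k + 1 : ℕ) * qq) • (Z * iDP B Z 1 (2 * k)) := by
  rw [iDP_odd, show 2 * k + 1 + 1 = 2 * (k + 1) from by ring, iDP_even B Z 1 (k + 1),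
    iDP_even B Z 1 k, cfun_one_eq, pr_succ' B Z hZ]
  simp only [mul_smul_comm, smul_sub, smul_smul]
  rw [← mul_assoc, ← sq]
  have hs1 : qint ((2 * k + 1 : ℕ) + 1) * (qfact (2 * (k + 1)))⁻¹ = (qfact (2 * k + 1))⁻¹ := by
    rw [show 2 * (k + 1) = 2 * k + 1 + 1 from by ring, qfact_inv_succ]
  have hs2 : qint ((2 * k + 1 : ℕ) + 1) * ((qfact (2 * (k + 1)))⁻¹ * cfun 1 true k)
      = qint (2 * k + 1 : ℕ) * qq * (qfact (2 * k))⁻¹ := by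
    have h1 : ((2 * k + 1 : ℕ) : ℤ) = (2 * k : ℕ) + 1 := by push_cast; ring
    have h2 : (2 * (k : ℤ) + 1) = ((2 * k : ℕ) : ℤ) + 1 := by push_cast; ring
    rw [cfun_one, show 2 * (k + 1) = 2 * k + 1 + 1 from by ring,
      qfact_succ (2 * k + 1), qfact_succ (2 * k), h1, h2]
    have n1 := qfact_ne_zero (2 * k)
    have n2 := qint_succ_ne_zero (2 * k)
    have n3 : qint (((2 * k : ℕ) : ℤ) + 1 + 1) ≠ 0 := by
      have := qint_succ_ne_zero (2 * k + 1); rw [h1] at this; exact this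
    exact scalar_key _ _ _ _ n1 n2 n3
  rw [hs1, hs2]
  abel

lemma L4 (k : ℕ) :
    B * iDP B Z 0 (2 * k) = qint ((2 * k : ℕ) + 1) • iDP B Z 0 (2 * k + 1)
      + (qint (2 * k : ℕ) * qq) • (Z * iDP B Z 0 (2 * k - 1)) := by
  obtain rfl | ⟨k', rfl⟩ : k = 0 ∨ ∃ k', k = k' + 1 := by
    rcases k with _ | k''
    · exact Or.inl rfl
    · exact Or.inr ⟨k'', rfl⟩
  · simp only [Nat.mul_zero, Nat.zero_add, iDP_zero, mul_one, Nat.cast_zero, qint_zero,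
      zero_mul, zero_smul, add_zero, Nat.cast_ofNat, zero_add]
    rw [iDP_one_zero, qint_one, one_smul]
  · have hsub : 2 * (k' + 1) - 1 = 2 * k' + 1 := by omega
    rw [hsub, iDP_even B Z 0 (k' + 1), iDP_odd B Z 0 (k' + 1), iDP_odd B Z 0 k',
      pr_cons B Z (cfun 0 false) k', cfun_zero_false_zero, zero_smul, sub_zero,
      cfun_zero_shift, pr_succ' B Z hZ (cfun 0 true) k']
    simp only [mul_smul_comm, mul_sub, smul_sub, smul_smul]
    rw [hBZ B Z hZ]
    have hs1 : qint ((2 * (k' + 1) : ℕ) + 1) * (qfact (2 * (k' + 1) + 1))⁻¹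
        = (qfact (2 * (k' + 1)))⁻¹ := qfact_inv_succ _
    have hs2 : qint ((2 * (k' + 1) : ℕ) + 1) * ((qfact (2 * (k' + 1) + 1))⁻¹ * cfun 0 true k')
        = qint (2 * (k' + 1) : ℕ) * qq * (qfact (2 * k' + 1))⁻¹ := by
      have h1 : ((2 * k' + 1 + 1 : ℕ) : ℤ) = ((2 * k' + 1 : ℕ) : ℤ) + 1 := by push_cast; ring
      have h2 : (2 * (k' : ℤ) + 2) = ((2 * k' + 1 : ℕ) : ℤ) + 1 := by push_cast; ring
      rw [cfun_zero_true, show 2 * (k' + 1) = 2 * k' + 1 + 1 from by ring,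
        qfact_succ (2 * k' + 1 + 1), qfact_succ (2 * k' + 1), h1, h2]
      have n1 := qfact_ne_zero (2 * k' + 1)
      have n2 := qint_succ_ne_zero (2 * k' + 1)
      have n3 : qint (((2 * k' + 1 : ℕ) : ℤ) + 1 + 1) ≠ 0 := by
        have := qint_succ_ne_zero (2 * k' + 1 + 1)
        rw [h1] at this; exact this
      exact scalar_key _ _ _ _ n1 n2 n3
    rw [hs1, hs2]
    abel

end Rec

/-! ### Parity casts -/

lemma castE (k : ℕ) : ((2 * k : ℕ) : ZMod 2) = 0 := by
  push_cast
  rw [show ((2 : ZMod 2)) = 0 from rfl, zero_mul]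

lemma castO (k : ℕ) : ((2 * k + 1 : ℕ) : ZMod 2) = 1 := by
  push_cast
  rw [show ((2 : ZMod 2)) = 0 from rfl, zero_mul, zero_add]

lemma pcases (p : ZMod 2) : p = 0 ∨ p = 1 := by
  fin_cases p
  · exact Or.inl rfl
  · exact Or.inr rfl

section Wrap
variable {A : Type*} [Ring A] [Algebra K A] (B Z : A) (hZ : ∀ a : A, Z * a = a * Z)

lemma iDP_rec1 (p : ZMod 2) (m : ℕ) (h : p ≠ (m : ZMod 2)) :
    B * iDP B Z p m = qint (m + 1) • iDP B Z p (m + 1) := by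
  obtain ⟨k, rfl | rfl⟩ : ∃ k, m = 2 * k ∨ m = 2 * k + 1 := ⟨m / 2, by omega⟩
  · rcases pcases p with rfl | rfl
    · exact absurd (castE k).symm h
    · exact L1 B Z k
  · rcases pcases p with rfl | rfl
    · exact L2 B Z k
    · exact absurd (castO k).symm h

include hZ in
lemma iDP_rec2 (p : ZMod 2) (m : ℕ) (h : p = (m : ZMod 2)) :
    B * iDP B Z p m = qint (m + 1) • iDP B Z p (m + 1)
      + (qint m * qq) • (Z * iDP B Z p (m - 1)) := by
  obtain ⟨k, rfl | rfl⟩ : ∃ k, m = 2 * k ∨ m = 2 * k + 1 := ⟨m / 2, by omega⟩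
  · rcases pcases p with rfl | rfl
    · exact L4 B Z hZ k
    · rw [castE] at h; exact absurd h one_ne_zero
  · rcases pcases p with rfl | rfl
    · rw [castO] at h; exact absurd h.symm one_ne_zero
    · have := L3 B Z hZ k
      rw [show 2 * k + 1 - 1 = 2 * k from by omega]
      exact this

end Wrap


theorem stmt8 {A : Type*} [Ring A] [Algebra K A] (B Z : A)
    (hZ : ∀ a : A, Z * a = a * Z)
    (Bf : ZMod 2 → ℕ → A)
    (h0 : ∀ p, Bf p 0 = 1)
    (hrec1 : ∀ (p : ZMod 2) (m : ℕ), p ≠ (m : ZMod 2) →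
      B * Bf p m = qint (m + 1) • Bf p (m + 1))
    (hrec2 : ∀ (p : ZMod 2) (m : ℕ), p = (m : ZMod 2) →
      B * Bf p m = qint (m + 1) • Bf p (m + 1) + (qint m * qq) • (Z * Bf p (m - 1))) :
    ∀ (p : ZMod 2) (m : ℕ), Bf p m = iDP B Z p m := by
  intro p m
  induction m using Nat.strong_induction_on with
  | _ m ih =>
    obtain _ | n := m
    · rw [h0, iDP_zero]
    · have hq := qint_succ_ne_zero n
      have e3 : qint ((n : ℤ) + 1) • Bf p (n + 1) = qint ((n : ℤ) + 1) • iDP B Z p (n + 1) := by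
        by_cases hp : p = ((n : ℕ) : ZMod 2)
        · have e1 := hrec2 p n hp
          have e2 := iDP_rec2 B Z hZ p n hp
          rw [ih n (by omega), ih (n - 1) (by omega)] at e1
          exact add_right_cancel (e1.symm.trans e2)
        · have e1 := hrec1 p n hp
          have e2 := iDP_rec1 B Z p n hp
          rw [ih n (by omega)] at e1
          exact e1.symm.trans e2
      calc Bf p (n + 1) = (qint ((n : ℤ) + 1))⁻¹ • (qint ((n : ℤ) + 1) • Bf p (n + 1)) :=
            (inv_smul_smul₀ hq _).symm
        _ = (qint ((n : ℤ) + 1))⁻¹ • (qint ((n : ℤ) + 1) • iDP B Z p (n + 1)) := by rw [e3]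
        _ = iDP B Z p (n + 1) := inv_smul_smul₀ hq _
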